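/- arXiv:2008.08844 — 3 statements merged into one kernel-verified Lean document; each statement's English description precedes it below -/
import Mathlib

section
/- Assume G is connected, is not bipartite (i.e. G is not 2-colorable), and every degree d_i > 0. Then every eigenvalue λ of the symmetric normalized Laplacian L_sym satisfies λ < 2; equivalently, −1 is not an eigenvalue of the symmetric affinity matrix A_sym = D^{-1/2} A D^{-1/2}. -/
open Matrix BigOperators

/-- Assume `G` is connected, not bipartite (not 2-colorable), and every degree
`d_i > 0`. Then every eigenvalue `λ` of the symmetric normalized Laplacian
`L_sym` satisfies `λ < 2`; equivalently, `−1` is not an eigenvalue of the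
symmetric affinity matrix `A_sym = D^{-1/2} A D^{-1/2}`. -/
theorem non_bipartite_connected_eigenvalue_lt_two
    (N : ℕ) (G : SimpleGraph (Fin N)) [DecidableRel G.Adj]
    (hconn : G.Connected) (hnotbip : ¬ G.Colorable 2)
    (A : Matrix (Fin N) (Fin N) ℝ) (hA : A = G.adjMatrix ℝ)
    (d : Fin N → ℝ) (hd : ∀ i, d i = ∑ j, A i j) (hdpos : ∀ i, 0 < d i)
    (Asym : Matrix (Fin N) (Fin N) ℝ)
    (hAsym : Asym = Matrix.diagonal (fun i => 1 / Real.sqrt (d i)) * A *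
        Matrix.diagonal (fun i => 1 / Real.sqrt (d i)))
    (Lsym : Matrix (Fin N) (Fin N) ℝ) (hLsym : Lsym = 1 - Asym) :
    (∀ (lam : ℝ) (u : Fin N → ℝ), u ≠ 0 → Lsym.mulVec u = lam • u → lam < 2) ∧
    ¬ ∃ u : Fin N → ℝ, u ≠ 0 ∧ Asym.mulVec u = (-1 : ℝ) • u := by
  have hAnn : ∀ i j, 0 ≤ A i j := by
    intro i j; rw [hA]; simp only [SimpleGraph.adjMatrix_apply]
    split <;> norm_num
  have hAsymm : ∀ i j, A i j = A j i := by
    intro i j; rw [hA]; simp [SimpleGraph.adjMatrix_apply, G.adj_comm]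
  have hAadj : ∀ i j, G.Adj i j → A i j = 1 := by
    intro i j h; rw [hA]; simp [SimpleGraph.adjMatrix_apply, h]
  -- main lemma: any eigenvalue μ of Asym satisfies -1 < μ
  have main : ∀ (μ : ℝ) (u : Fin N → ℝ), u ≠ 0 → Asym.mulVec u = μ • u → -1 < μ := by
    intro μ u hu hev
    set s : Fin N → ℝ := fun i => Real.sqrt (d i) with hs_def
    have hs : ∀ i, 0 < s i := fun i => Real.sqrt_pos.mpr (hdpos i)
    set w : Fin N → ℝ := fun i => u i / s i with hw_def
    have huw : ∀ i, u i = s i * w i := by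
      intro i
      have hsi := (hs i).ne'
      simp only [hw_def]
      field_simp
    have hAe : ∀ i j, Asym i j = (1 / s i) * A i j * (1 / s j) := by
      intro i j; rw [hAsym]
      simp [Matrix.mul_diagonal, Matrix.diagonal_mul]; rfl
    have hrow : ∀ i, ∑ j, A i j * w j = μ * (s i * u i) := by
      intro i
      have h1 : ∑ j, Asym i j * u j = μ * u i := by
        have := congrFun hev i
        simpa [Matrix.mulVec, dotProduct, Pi.smul_apply, smul_eq_mul] using this
      have h2 : ∑ j, A i j * w j = s i * ∑ j, Asym i j * u j := by
        rw [Finset.mul_sum]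
        refine Finset.sum_congr rfl fun j _ => ?_
        rw [hAe]
        have hsj := (hs j).ne'
        have hsi := (hs i).ne'
        field_simp [hw_def]
        rw [huw j]; ring
      rw [h2, h1]; ring
    set S := ∑ i, u i ^ 2 with hS_def
    have hSpos : 0 < S := by
      obtain ⟨i0, hi0⟩ := Function.ne_iff.mp hu
      have hi0' : u i0 ≠ 0 := by simpa using hi0
      refine Finset.sum_pos' (fun i _ => sq_nonneg _) ⟨i0, Finset.mem_univ _, ?_⟩
      positivity
    have hdw : ∀ i, d i * w i ^ 2 = u i ^ 2 := by
      intro i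
      have h2 : s i ^ 2 = d i := Real.sq_sqrt (hdpos i).le
      have hsi := (hs i).ne'
      rw [← h2]
      field_simp [hw_def]
      rw [huw i]; ring
    have hP1 : ∑ i, ∑ j, A i j * w i ^ 2 = S := by
      rw [hS_def]
      refine Finset.sum_congr rfl fun i _ => ?_
      rw [← Finset.sum_mul, ← hd, hdw]
    have hP3 : ∑ i, ∑ j, A i j * w j ^ 2 = S := by
      rw [Finset.sum_comm, ← hP1]
      refine Finset.sum_congr rfl fun i _ => Finset.sum_congr rfl fun j _ => ?_
      rw [hAsymm]
    have hP2 : ∑ i, ∑ j, A i j * w i * w j = μ * S := by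
      have : ∀ i, ∑ j, A i j * w i * w j = w i * (μ * (s i * u i)) := by
        intro i
        rw [← hrow, Finset.mul_sum]
        exact Finset.sum_congr rfl fun j _ => by ring
      rw [Finset.sum_congr rfl fun i _ => this i, hS_def, Finset.mul_sum]
      refine Finset.sum_congr rfl fun i _ => ?_
      rw [huw i]; ring
    have hT : ∑ i, ∑ j, A i j * (w i + w j) ^ 2 = 2 * (1 + μ) * S := by
      have expand : ∀ i j, A i j * (w i + w j) ^ 2 =
          A i j * w i ^ 2 + 2 * (A i j * w i * w j) + A i j * w j ^ 2 := by
        intro i j; ring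
      calc ∑ i, ∑ j, A i j * (w i + w j) ^ 2
          = ∑ i, ∑ j, (A i j * w i ^ 2 + 2 * (A i j * w i * w j) + A i j * w j ^ 2) := by
            exact Finset.sum_congr rfl fun i _ => Finset.sum_congr rfl fun j _ => expand i j
        _ = (∑ i, ∑ j, A i j * w i ^ 2) + 2 * (∑ i, ∑ j, A i j * w i * w j)
              + (∑ i, ∑ j, A i j * w j ^ 2) := by
            simp [Finset.sum_add_distrib, Finset.mul_sum]
        _ = S + 2 * (μ * S) + S := by rw [hP1, hP2, hP3]
        _ = 2 * (1 + μ) * S := by ring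
    have hTnn : 0 ≤ ∑ i, ∑ j, A i j * (w i + w j) ^ 2 :=
      Finset.sum_nonneg fun i _ => Finset.sum_nonneg fun j _ =>
        mul_nonneg (hAnn i j) (sq_nonneg _)
    have hge : -1 ≤ μ := by nlinarith [hTnn, hT, hSpos]
    rcases lt_or_eq_of_le hge with h | h
    · exact h
    -- case μ = -1 : contradiction with non-bipartiteness
    exfalso
    have hT0 : ∑ i, ∑ j, A i j * (w i + w j) ^ 2 = 0 := by
      rw [hT, ← h]; ring
    have hterm : ∀ i j, A i j * (w i + w j) ^ 2 = 0 := by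
      intro i j
      have h1 := (Finset.sum_eq_zero_iff_of_nonneg
        (fun i _ => Finset.sum_nonneg fun j _ =>
          mul_nonneg (hAnn i j) (sq_nonneg _))).mp hT0 i (Finset.mem_univ i)
      exact (Finset.sum_eq_zero_iff_of_nonneg
        (fun j _ => mul_nonneg (hAnn i j) (sq_nonneg _))).mp h1 j (Finset.mem_univ j)
    have hflip : ∀ i j, G.Adj i j → w j = -w i := by
      intro i j hij
      have := hterm i j
      rw [hAadj i j hij, one_mul] at this
      have := pow_eq_zero_iff (n := 2) (by norm_num) |>.mp this
      linarith
    -- w is nonzero everywhere by connectivity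
    obtain ⟨i0, hi0⟩ := Function.ne_iff.mp hu
    have hw0 : w i0 ≠ 0 := by
      have hsi := (hs i0).ne'
      simp only [hw_def]
      exact div_ne_zero hi0 hsi
    have step : ∀ a b (p : G.Walk a b), w a ≠ 0 → w b ≠ 0 := by
      intro a b p
      induction p with
      | nil => exact id
      | @cons a b c hab p ih =>
        intro ha
        apply ih
        rw [hflip a b hab]
        exact neg_ne_zero.mpr ha
    have hall : ∀ v, w v ≠ 0 := by
      intro v
      obtain ⟨p⟩ := hconn.preconnected i0 v
      exact step i0 v p hw0
    -- build a 2-coloring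
    refine hnotbip ⟨SimpleGraph.Coloring.mk
      (fun v => if 0 < w v then (0 : Fin 2) else 1) ?_⟩
    intro a b hab
    have hba : w b = -w a := hflip a b hab
    have ha := hall a
    rcases lt_or_gt_of_ne ha with hlt | hgt
    · have hb : 0 < w b := by rw [hba]; linarith
      simp [hlt.not_gt, hb]
    · have hb : ¬ 0 < w b := by rw [hba]; linarith
      simp [hgt, hb]
  constructor
  · intro lam u hu hev
    have hAv : Asym.mulVec u = (1 - lam) • u := by
      have h1 : Lsym.mulVec u = u - Asym.mulVec u := by
        rw [hLsym, Matrix.sub_mulVec, Matrix.one_mulVec]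
      have h2 : Asym.mulVec u = u - lam • u := by
        rw [← hev, h1]; abel
      rw [h2]
      ext i
      simp only [Pi.sub_apply, Pi.smul_apply, smul_eq_mul, one_mul]
      ring
    have := main (1 - lam) u hu hAv
    linarith
  · rintro ⟨u, hu, hev⟩
    have := main (-1) u hu hev
    linarith
end

section
/- Every eigenvalue λ of the renormalized symmetric affinity matrix Â_sym = (D+I)^{-1/2} (A+I) (D+I)^{-1/2} satisfies −1 < λ ≤ 1. No connectivity or non-bipartiteness assumption on G is needed. -/
open Matrix BigOperators

/-- Every eigenvalue `λ` of the renormalized symmetric affinity matrix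
`Â_sym = (D+I)^{-1/2} (A+I) (D+I)^{-1/2}` satisfies `−1 < λ ≤ 1`. -/
theorem renormalized_sym_affinity_eigenvalue_bounds
    (N : ℕ) (A : Matrix (Fin N) (Fin N) ℝ)
    (hsym : A.IsSymm) (hdiag : ∀ i, A i i = 0)
    (h01 : ∀ i j, A i j = 0 ∨ A i j = 1)
    (d : Fin N → ℝ) (hd : ∀ i, d i = ∑ j, A i j)
    (Ahatsym : Matrix (Fin N) (Fin N) ℝ)
    (hAhatsym : Ahatsym = Matrix.diagonal (fun i => 1 / Real.sqrt (d i + 1)) *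
        (A + 1) * Matrix.diagonal (fun i => 1 / Real.sqrt (d i + 1))) :
    ∀ (lam : ℝ) (u : Fin N → ℝ), u ≠ 0 → Ahatsym.mulVec u = lam • u →
      -1 < lam ∧ lam ≤ 1 := by
  intro lam u hu0 hu
  set s : Fin N → ℝ := fun i => 1 / Real.sqrt (d i + 1) with hs_def
  set B : Matrix (Fin N) (Fin N) ℝ := A + 1 with hB_def
  -- basic positivity facts
  have hd0 : ∀ i, 0 ≤ d i := by
    intro i; rw [hd i]
    apply Finset.sum_nonneg; intro j _
    rcases h01 i j with h | h <;> simp [h]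
  have hd1 : ∀ i, (0:ℝ) < d i + 1 := fun i => by linarith [hd0 i]
  have hsqrt : ∀ i, 0 < Real.sqrt (d i + 1) := fun i => Real.sqrt_pos.2 (hd1 i)
  have hs_pos : ∀ i, 0 < s i := fun i => by
    simp only [hs_def]
    exact div_pos one_pos (hsqrt i)
  have hs_sq : ∀ i, s i * s i * (d i + 1) = 1 := by
    intro i
    have h := Real.mul_self_sqrt (le_of_lt (hd1 i))
    simp only [hs_def]
    field_simp
    rw [Real.sq_sqrt (le_of_lt (hd1 i)), div_self (ne_of_gt (hd1 i))]
  -- entries of B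
  have hB : ∀ i j, B i j = A i j + (if i = j then (1:ℝ) else 0) := by
    intro i j
    simp [hB_def, Matrix.add_apply, Matrix.one_apply]
  have hB0 : ∀ i j, 0 ≤ B i j := by
    intro i j; rw [hB]
    rcases h01 i j with h | h <;> split <;> simp [h]
  have hAsym : ∀ i j, A i j = A j i := by
    intro i j
    have := congrFun (congrFun hsym j) i
    simpa [Matrix.transpose_apply] using this
  have hBsym : ∀ i j, B i j = B j i := by
    intro i j; rw [hB, hB, hAsym i j]
    by_cases h : i = j <;> simp [h, eq_comm]
  have hBdiag : ∀ i, B i i = 1 := by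
    intro i; rw [hB, hdiag]; simp
  have hBrow : ∀ i, ∑ j, B i j = d i + 1 := by
    intro i
    have : ∑ j, B i j = (∑ j, A i j) + ∑ j, (if i = j then (1:ℝ) else 0) := by
      rw [← Finset.sum_add_distrib]
      exact Finset.sum_congr rfl fun j _ => hB i j
    rw [this, ← hd i]
    simp
  -- entries of Ahatsym
  have hEntry : ∀ i j, Ahatsym i j = s i * B i j * s j := by
    intro i j
    rw [hAhatsym]
    rw [Matrix.mul_diagonal, Matrix.diagonal_mul]
  -- eigen-equation componentwise
  have heig : ∀ i, ∑ j, s i * B i j * s j * u j = lam * u i := by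
    intro i
    have h := congrFun hu i
    simp only [Matrix.mulVec, dotProduct, Pi.smul_apply, smul_eq_mul] at h
    rw [← h]
    exact Finset.sum_congr rfl fun j _ => by rw [hEntry]
  set w : Fin N → ℝ := fun i => s i * u i with hw_def
  set Q : ℝ := ∑ i, ∑ j, B i j * w i * w j with hQ_def
  set S : ℝ := ∑ i, u i ^ 2 with hS_def
  -- Q = lam * S
  have hQ : Q = lam * S := by
    calc Q = ∑ i, (∑ j, s i * B i j * s j * u j) * u i := by
            refine Finset.sum_congr rfl fun i _ => ?_
            rw [Finset.sum_mul]
            exact Finset.sum_congr rfl fun j _ => by simp only [hw_def]; ring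
      _ = ∑ i, (lam * u i) * u i := Finset.sum_congr rfl fun i _ => by rw [heig i]
      _ = lam * S := by rw [hS_def, Finset.mul_sum]; exact Finset.sum_congr rfl fun i _ => by ring
  -- S rewritten via rows of B
  have hu2 : ∀ i, (d i + 1) * w i ^ 2 = u i ^ 2 := by
    intro i
    have := hs_sq i
    simp only [hw_def]
    nlinarith [hs_sq i]
  have hSB : ∑ i, ∑ j, B i j * w i ^ 2 = S := by
    rw [hS_def]
    refine Finset.sum_congr rfl fun i _ => ?_
    rw [← Finset.sum_mul, hBrow i, hu2 i]
  have hSB' : ∑ i, ∑ j, B i j * w j ^ 2 = S := by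
    rw [Finset.sum_comm]
    calc ∑ j, ∑ i, B i j * w j ^ 2 = ∑ j, ∑ i, B j i * w j ^ 2 := by
          exact Finset.sum_congr rfl fun j _ => Finset.sum_congr rfl fun i _ => by rw [hBsym i j]
      _ = S := hSB
  -- key identities
  have hkey1 : ∑ i, ∑ j, B i j * (w i - w j) ^ 2 = 2 * S - 2 * Q := by
    have step : ∑ i, ∑ j, B i j * (w i - w j) ^ 2
        = (∑ i, ∑ j, B i j * w i ^ 2) + (∑ i, ∑ j, B i j * w j ^ 2)
          - 2 * (∑ i, ∑ j, B i j * w i * w j) := by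
      rw [← Finset.sum_add_distrib, Finset.mul_sum, ← Finset.sum_sub_distrib]
      refine Finset.sum_congr rfl fun i _ => ?_
      rw [← Finset.sum_add_distrib, Finset.mul_sum, ← Finset.sum_sub_distrib]
      exact Finset.sum_congr rfl fun j _ => by ring
    rw [step, hSB, hSB', ← hQ_def]; ring
  have hkey2 : ∑ i, ∑ j, B i j * (w i + w j) ^ 2 = 2 * S + 2 * Q := by
    have step : ∑ i, ∑ j, B i j * (w i + w j) ^ 2
        = (∑ i, ∑ j, B i j * w i ^ 2) + (∑ i, ∑ j, B i j * w j ^ 2)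
          + 2 * (∑ i, ∑ j, B i j * w i * w j) := by
      rw [← Finset.sum_add_distrib, Finset.mul_sum, ← Finset.sum_add_distrib]
      refine Finset.sum_congr rfl fun i _ => ?_
      rw [← Finset.sum_add_distrib, Finset.mul_sum, ← Finset.sum_add_distrib]
      exact Finset.sum_congr rfl fun j _ => by ring
    rw [step, hSB, hSB', ← hQ_def]; ring
  -- nonnegativity of the minus-form
  have hnn1 : 0 ≤ ∑ i, ∑ j, B i j * (w i - w j) ^ 2 :=
    Finset.sum_nonneg fun i _ => Finset.sum_nonneg fun j _ =>
      mul_nonneg (hB0 i j) (sq_nonneg _)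
  -- strict positivity of the plus-form
  obtain ⟨k, hk⟩ : ∃ k, u k ≠ 0 := Function.ne_iff.mp hu0
  have hwk : w k ≠ 0 := by
    simp only [hw_def]
    exact mul_ne_zero (ne_of_gt (hs_pos k)) hk
  have hSpos : 0 < S := by
    rw [hS_def]
    have h1 : u k ^ 2 ≤ ∑ i, u i ^ 2 :=
      Finset.single_le_sum (fun i _ => sq_nonneg (u i)) (Finset.mem_univ k)
    have h2 : 0 < u k ^ 2 := by positivity
    linarith
  have hlow : 0 < ∑ i, ∑ j, B i j * (w i + w j) ^ 2 := by
    have h1 : ∀ i, B i i * (w i + w i) ^ 2 ≤ ∑ j, B i j * (w i + w j) ^ 2 :=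
      fun i => Finset.single_le_sum (f := fun j => B i j * (w i + w j) ^ 2)
        (fun j _ => mul_nonneg (hB0 i j) (sq_nonneg _)) (Finset.mem_univ i)
    have h2 : ∑ i, B i i * (w i + w i) ^ 2 ≤ ∑ i, ∑ j, B i j * (w i + w j) ^ 2 :=
      Finset.sum_le_sum fun i _ => h1 i
    have h3 : B k k * (w k + w k) ^ 2 ≤ ∑ i, B i i * (w i + w i) ^ 2 :=
      Finset.single_le_sum (f := fun i => B i i * (w i + w i) ^ 2)
        (fun i _ => mul_nonneg (hB0 i i) (sq_nonneg _)) (Finset.mem_univ k)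
    have h4 : 0 < B k k * (w k + w k) ^ 2 := by
      rw [hBdiag k]
      have : w k + w k ≠ 0 := by intro h; apply hwk; linarith [h]
      positivity
    linarith
  constructor
  · -- -1 < lam
    rw [hkey2, hQ] at hlow
    nlinarith
  · -- lam ≤ 1
    rw [hkey1, hQ] at hnn1
    nlinarith
end

section
/- Every eigenvalue μ of the renormalized symmetric Laplacian L̂_sym = I − (D+I)^{-1/2} (A+I) (D+I)^{-1/2} satisfies 0 ≤ μ < 2. -/
open Matrix BigOperators

/-- Every eigenvalue `μ` of the renormalized symmetric Laplacian
`L̂_sym = I − (D+I)^{-1/2} (A+I) (D+I)^{-1/2}` satisfies `0 ≤ μ < 2`. -/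
theorem renormalized_sym_laplacian_eigenvalue_bounds
    (N : ℕ) (A : Matrix (Fin N) (Fin N) ℝ)
    (hsym : A.IsSymm) (hdiag : ∀ i, A i i = 0)
    (h01 : ∀ i j, A i j = 0 ∨ A i j = 1)
    (d : Fin N → ℝ) (hd : ∀ i, d i = ∑ j, A i j)
    (Lhatsym : Matrix (Fin N) (Fin N) ℝ)
    (hLhatsym : Lhatsym = 1 - Matrix.diagonal (fun i => 1 / Real.sqrt (d i + 1)) *
        (A + 1) * Matrix.diagonal (fun i => 1 / Real.sqrt (d i + 1))) :
    ∀ (mu : ℝ) (u : Fin N → ℝ), u ≠ 0 → Lhatsym.mulVec u = mu • u →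
      0 ≤ mu ∧ mu < 2 := by
  intro mu u hu hEq
  set s : Fin N → ℝ := fun i => 1 / Real.sqrt (d i + 1) with hs
  have hA0 : ∀ i j, 0 ≤ A i j := by
    intro i j; rcases h01 i j with h | h <;> simp [h]
  have hd0 : ∀ i, 0 ≤ d i := by
    intro i; rw [hd]; exact Finset.sum_nonneg fun j _ => hA0 i j
  have hd1 : ∀ i, 0 < d i + 1 := fun i => by linarith [hd0 i]
  have hspos : ∀ i, 0 < s i := by
    intro i
    have := Real.sqrt_pos.mpr (hd1 i)
    positivity
  have hsq : ∀ i, s i ^ 2 * (d i + 1) = 1 := by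
    intro i
    have h1 : Real.sqrt (d i + 1) ^ 2 = d i + 1 := Real.sq_sqrt (le_of_lt (hd1 i))
    have h2 : Real.sqrt (d i + 1) ≠ 0 := ne_of_gt (Real.sqrt_pos.mpr (hd1 i))
    simp only [hs]
    field_simp
    linarith [h1]
  set y : Fin N → ℝ := fun i => s i * u i with hy
  have huy : ∀ i, u i ^ 2 = (d i + 1) * y i ^ 2 := by
    intro i
    have h := hsq i
    have : (d i + 1) * y i ^ 2 = (s i ^ 2 * (d i + 1)) * u i ^ 2 := by
      simp only [hy]; ring
    rw [this, h, one_mul]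
  -- entrywise formula for Lhatsym
  have hL : ∀ i j, Lhatsym i j =
      (if i = j then (1 : ℝ) else 0) - s i * (A i j + if i = j then (1:ℝ) else 0) * s j := by
    intro i j
    rw [hLhatsym]
    simp [Matrix.sub_apply, Matrix.one_apply, Matrix.mul_diagonal, Matrix.diagonal_mul,
      Matrix.add_apply]
  -- quadratic form
  have hform : mu * (∑ i, u i ^ 2) =
      (∑ i, u i ^ 2) - (∑ i, y i ^ 2) - ∑ i, ∑ j, A i j * (y i * y j) := by
    have hlhs : ∑ i, u i * (Lhatsym.mulVec u) i = ∑ i, u i * (mu • u) i := by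
      rw [hEq]
    have hr : ∑ i, u i * (mu • u) i = mu * ∑ i, u i ^ 2 := by
      rw [Finset.mul_sum]
      exact Finset.sum_congr rfl fun i _ => by simp [Pi.smul_apply]; ring
    have hl : ∑ i, u i * (Lhatsym.mulVec u) i =
        (∑ i, u i ^ 2) - (∑ i, y i ^ 2) - ∑ i, ∑ j, A i j * (y i * y j) := by
      have step : ∀ i, u i * (Lhatsym.mulVec u) i =
          (u i ^ 2 - y i ^ 2) - ∑ j, A i j * (y i * y j) := by
        intro i
        rw [Matrix.mulVec, dotProduct, Finset.mul_sum]
        have h1 : ∀ j, u i * (Lhatsym i j * u j) =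
            (if i = j then u i * u j - (s i * u i) * (s j * u j) else 0)
              - A i j * ((s i * u i) * (s j * u j)) := by
          intro j
          rw [hL i j]
          split_ifs with h
          · subst h; ring
          · ring
        rw [Finset.sum_congr rfl fun j _ => h1 j, Finset.sum_sub_distrib,
          Finset.sum_ite_eq (Finset.univ) i
            (fun j => u i * u j - (s i * u i) * (s j * u j))]
        have h2 : (∑ j, A i j * (s i * u i * (s j * u j))) = ∑ j, A i j * (y i * y j) := rfl
        simp only [Finset.mem_univ, if_true]
        rw [h2]
        simp only [hy]
        ring
      rw [Finset.sum_congr rfl fun i _ => step i, Finset.sum_sub_distrib,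
        Finset.sum_sub_distrib]
    rw [← hr, ← hlhs, hl]
  -- sum identities
  have hAyi : ∑ i, ∑ j, A i j * y i ^ 2 = ∑ i, d i * y i ^ 2 := by
    refine Finset.sum_congr rfl fun i _ => ?_
    rw [← Finset.sum_mul, ← hd i]
  have hAyj : ∑ i, ∑ j, A i j * y j ^ 2 = ∑ i, d i * y i ^ 2 := by
    rw [Finset.sum_comm]
    refine Finset.sum_congr rfl fun j _ => ?_
    rw [← Finset.sum_mul]
    congr 1
    rw [hd j]
    exact Finset.sum_congr rfl fun i _ => hsym.apply j i
  have expand2 : ∀ (c : ℝ), (∑ i, ∑ j, A i j * (y i + c * y j) ^ 2) =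
      (1 + c ^ 2) * (∑ i, d i * y i ^ 2) + 2 * c * ∑ i, ∑ j, A i j * (y i * y j) := by
    intro c
    have h1 : ∀ i j, A i j * (y i + c * y j) ^ 2 =
        A i j * y i ^ 2 + c ^ 2 * (A i j * y j ^ 2) + 2 * c * (A i j * (y i * y j)) := by
      intro i j; ring
    calc (∑ i, ∑ j, A i j * (y i + c * y j) ^ 2)
        = ∑ i, ((∑ j, A i j * y i ^ 2) + c ^ 2 * (∑ j, A i j * y j ^ 2)
            + 2 * c * (∑ j, A i j * (y i * y j))) := by
          refine Finset.sum_congr rfl fun i _ => ?_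
          rw [Finset.mul_sum, Finset.mul_sum, ← Finset.sum_add_distrib,
            ← Finset.sum_add_distrib]
          exact Finset.sum_congr rfl fun j _ => h1 i j
      _ = (∑ i, ∑ j, A i j * y i ^ 2) + c ^ 2 * (∑ i, ∑ j, A i j * y j ^ 2)
            + 2 * c * ∑ i, ∑ j, A i j * (y i * y j) := by
          rw [Finset.sum_add_distrib, Finset.sum_add_distrib, ← Finset.mul_sum,
            ← Finset.mul_sum]
      _ = _ := by rw [hAyi, hAyj]; ring
  have hminus : ∑ i, ∑ j, A i j * (y i + (-1) * y j) ^ 2 =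
      2 * (∑ i, d i * y i ^ 2) - 2 * ∑ i, ∑ j, A i j * (y i * y j) := by
    rw [expand2 (-1)]; ring
  have hplus : ∑ i, ∑ j, A i j * (y i + 1 * y j) ^ 2 =
      2 * (∑ i, d i * y i ^ 2) + 2 * ∑ i, ∑ j, A i j * (y i * y j) := by
    rw [expand2 1]; ring
  have hqminus : (0:ℝ) ≤ ∑ i, ∑ j, A i j * (y i + (-1) * y j) ^ 2 :=
    Finset.sum_nonneg fun i _ => Finset.sum_nonneg fun j _ =>
      mul_nonneg (hA0 i j) (sq_nonneg _)
  have hqplus : (0:ℝ) ≤ ∑ i, ∑ j, A i j * (y i + 1 * y j) ^ 2 :=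
    Finset.sum_nonneg fun i _ => Finset.sum_nonneg fun j _ =>
      mul_nonneg (hA0 i j) (sq_nonneg _)
  -- positivity of norms
  obtain ⟨i0, hi0⟩ : ∃ i, u i ≠ 0 := by
    by_contra h
    push_neg at h
    exact hu (funext h)
  have hypos : (0:ℝ) < ∑ i, y i ^ 2 := by
    have hyi0 : y i0 ≠ 0 := mul_ne_zero (ne_of_gt (hspos i0)) hi0
    have h1 : 0 < y i0 ^ 2 := by positivity
    have h2 : y i0 ^ 2 ≤ ∑ i, y i ^ 2 :=
      Finset.single_le_sum (fun i _ => sq_nonneg (y i)) (Finset.mem_univ i0)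
    linarith
  have hUy : ∑ i, u i ^ 2 = (∑ i, d i * y i ^ 2) + ∑ i, y i ^ 2 := by
    rw [← Finset.sum_add_distrib]
    exact Finset.sum_congr rfl fun i _ => by rw [huy i]; ring
  have hUpos : (0:ℝ) < ∑ i, u i ^ 2 := by
    have hdy : (0:ℝ) ≤ ∑ i, d i * y i ^ 2 := by
      refine Finset.sum_nonneg fun i _ => mul_nonneg ?_ (sq_nonneg _)
      exact hd0 i
    linarith [hUy]
  -- conclude
  constructor
  · nlinarith [hform, hUy, hminus, hqminus, hUpos]
  · nlinarith [hform, hUy, hplus, hqplus, hUpos, hypos]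
end
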